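/- Let U ⊆ ℝ^m be a closed cone, ν : [0,∞) → [0,∞) a strictly increasing bijection, f : Ω × U → ℝⁿ continuous on an open set Ω ⊆ ℝⁿ, and define the rescaled dynamics f̄(x,u) = f(x,u)/(1 + ν(|u|)). Suppose x : [0,T) → Ω is locally absolutely continuous, u : [0,T) → U is measurable and locally essentially bounded, and ẋ(t) = f(x(t),u(t)) for a.e. t. Let s(t) = ∫₀ᵗ (1 + ν(|u(τ)|)) dτ, S = lim_{t→T⁻} s(t), and t(·) = s⁻¹. Then y(σ) := x(t(σ)) and v(σ) := u(t(σ)) satisfy y'(σ) = f̄(y(σ), v(σ)) for a.e. σ ∈ [0,S). -/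

import Mathlib

open MeasureTheory Set Filter
open scoped ENNReal NNReal Topology

/-- Image of a null set under a Lipschitz-on map is null (in ℝ). -/
lemma lipOn_image_null {s : ℝ → ℝ} {A N : Set ℝ} {C : ℝ≥0}
    (hlip : LipschitzOnWith C s A) (hN : N ⊆ A) (h0 : volume N = 0) :
    volume (s '' N) = 0 := by
  have h1 := (hlip.mono hN).hausdorffMeasure_image_le (d := 1) zero_le_one
  rw [MeasureTheory.hausdorffMeasure_real] at h1
  refine le_antisymm ?_ (zero_le)
  calc volume (s '' N) ≤ (C : ℝ≥0∞) ^ (1:ℝ) * volume N := h1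
  _ = 0 := by rw [h0, mul_zero]
lemma intInt_aux {g : ℝ → ℝ} (hgm : Measurable g) (hg0 : ∀ τ, 0 ≤ g τ) {b C : ℝ}
    (hgC : ∀ τ ∈ Icc (0:ℝ) b, g τ ≤ C) {t1 t2 : ℝ}
    (h1 : t1 ∈ Icc (0:ℝ) b) (h2 : t2 ∈ Icc (0:ℝ) b) :
    IntervalIntegrable g volume t1 t2 := by
  rw [intervalIntegrable_iff]
  have hbig : IntegrableOn g (Icc (0:ℝ) b) volume := by
    refine Measure.integrableOn_of_bounded (M := C) measure_Icc_lt_top.ne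
      hgm.aestronglyMeasurable ?_
    refine (ae_restrict_iff' measurableSet_Icc).2 (ae_of_all _ fun τ hτ => ?_)
    rw [Real.norm_eq_abs, abs_of_nonneg (hg0 τ)]
    exact hgC τ hτ
  refine hbig.mono_set fun τ hτ => ?_
  exact ⟨(le_inf h1.1 h2.1).trans hτ.1.le, hτ.2.trans (sup_le h1.2 h2.2)⟩

lemma subInt_aux {g : ℝ → ℝ} (hgm : Measurable g) (hg0 : ∀ τ, 0 ≤ g τ) {b C : ℝ}
    (hgC : ∀ τ ∈ Icc (0:ℝ) b, g τ ≤ C) {s : ℝ → ℝ}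
    (hs : ∀ t : ℝ, s t = ∫ τ in (0:ℝ)..t, g τ) {t1 t2 : ℝ}
    (h1 : t1 ∈ Icc (0:ℝ) b) (h2 : t2 ∈ Icc (0:ℝ) b) :
    s t2 - s t1 = ∫ τ in t1..t2, g τ := by
  have h0 : (0:ℝ) ∈ Icc (0:ℝ) b := ⟨le_refl _, h1.1.trans h1.2⟩
  rw [hs, hs]
  exact intervalIntegral.integral_interval_sub_left
    (intInt_aux hgm hg0 hgC h0 h2) (intInt_aux hgm hg0 hgC h0 h1)

lemma ae_hasDeriv_integral_aux {g : ℝ → ℝ} (hgm : Measurable g) (hg1 : ∀ τ, 1 ≤ g τ)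
    {s : ℝ → ℝ} (hs : ∀ t : ℝ, s t = ∫ τ in (0:ℝ)..t, g τ) {b C : ℝ}
    (hgC : ∀ τ ∈ Icc (0:ℝ) b, g τ ≤ C) :
    ∀ᵐ t ∂(volume : Measure ℝ), t ∈ Ioo (0:ℝ) b → HasDerivAt s (g t) t := by
  classical
  have hg0 : ∀ τ, 0 ≤ g τ := fun τ => zero_le_one.trans (hg1 τ)
  set gb : ℝ → ℝ := fun τ => if τ ∈ Icc (0:ℝ) b then g τ else 1 with hgb_def
  have hgbm : Measurable gb := Measurable.ite measurableSet_Icc hgm measurable_const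
  have hgb_bd : ∀ τ, ‖gb τ‖ ≤ max C 1 := by
    intro τ
    rw [Real.norm_eq_abs]
    by_cases hτ : τ ∈ Icc (0:ℝ) b
    · simp only [hgb_def, if_pos hτ]
      rw [abs_of_nonneg (hg0 τ)]
      exact le_max_of_le_left (hgC τ hτ)
    · simp only [hgb_def, if_neg hτ, abs_one, le_max_iff, le_refl, or_true]
  have hloc : LocallyIntegrable gb volume := by
    refine (locallyIntegrable_iff).2 fun k hk => ?_
    exact Measure.integrableOn_of_bounded hk.measure_lt_top.ne
      hgbm.aestronglyMeasurable (ae_of_all _ hgb_bd)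
  filter_upwards [(IsUnifLocDoublingMeasure.vitaliFamily (volume : Measure ℝ) 1).ae_tendsto_average
    hloc] with t ht htmem
  have hgbt : gb t = g t := if_pos ⟨htmem.1.le, htmem.2.le⟩
  rw [hgbt] at ht
  have hR := ht.comp (Real.tendsto_Icc_vitaliFamily_right t)
  have hL := ht.comp (Real.tendsto_Icc_vitaliFamily_left t)
  rw [hasDerivAt_iff_tendsto_slope, slope_fun_def_field, ← nhdsLT_sup_nhdsGT,
    tendsto_sup]
  have key : ∀ y1 y2 : ℝ, y1 ∈ Icc (0:ℝ) b → y2 ∈ Icc (0:ℝ) b → y1 ≤ y2 →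
      ∫ z in Icc y1 y2, gb z = s y2 - s y1 := by
    intro y1 y2 h1 h2 h12
    rw [MeasureTheory.integral_Icc_eq_integral_Ioc, ← intervalIntegral.integral_of_le h12]
    rw [intervalIntegral.integral_congr (g := g) ?_]
    · exact (subInt_aux hgm hg0 hgC hs h1 h2).symm
    · intro τ hτ
      rw [uIcc_of_le h12] at hτ
      exact if_pos ⟨h1.1.trans hτ.1, hτ.2.trans h2.2⟩
  constructor
  · -- left limit
    refine Tendsto.congr' ?_ hL
    filter_upwards [Ioo_mem_nhdsLT_of_mem (⟨htmem.1, le_refl t⟩ : t ∈ Ioc (0:ℝ) t)]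
      with y hy
    have hyb : y ∈ Icc (0:ℝ) b := ⟨hy.1.le, hy.2.le.trans htmem.2.le⟩
    have htb : t ∈ Icc (0:ℝ) b := ⟨htmem.1.le, htmem.2.le⟩
    have hvol : (volume (Icc y t)).toReal = t - y := by
      rw [Real.volume_Icc, ENNReal.toReal_ofReal (by linarith [hy.2])]
    rw [Function.comp_apply, setAverage_eq, key y t hyb htb hy.2.le, measureReal_def, hvol, smul_eq_mul]
    have h1 : y - t ≠ 0 := sub_ne_zero.2 hy.2.ne
    have h2 : t - y ≠ 0 := sub_ne_zero.2 hy.2.ne'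
    field_simp
    ring
  · -- right limit
    refine Tendsto.congr' ?_ hR
    filter_upwards [Ioo_mem_nhdsGT_of_mem (⟨le_refl t, htmem.2⟩ : t ∈ Ico t b)]
      with y hy
    have hyb : y ∈ Icc (0:ℝ) b := ⟨htmem.1.le.trans hy.1.le, hy.2.le⟩
    have htb : t ∈ Icc (0:ℝ) b := ⟨htmem.1.le, htmem.2.le⟩
    have hvol : (volume (Icc t y)).toReal = y - t := by
      rw [Real.volume_Icc, ENNReal.toReal_ofReal (by linarith [hy.1])]
    rw [Function.comp_apply, setAverage_eq, key t y htb hyb hy.1.le, measureReal_def, hvol, smul_eq_mul]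
    have h1 : y - t ≠ 0 := sub_ne_zero.2 hy.1.ne'
    field_simp

theorem stmt_2 {n m : ℕ}
    (U : Set (EuclideanSpace ℝ (Fin m))) (hUcl : IsClosed U)
    (hUcone : ∀ c : ℝ, 0 ≤ c → ∀ v ∈ U, c • v ∈ U)
    (ν : ℝ → ℝ) (hνmono : StrictMonoOn ν (Set.Ici 0))
    (hνbij : Set.BijOn ν (Set.Ici 0) (Set.Ici 0))
    (Ω : Set (EuclideanSpace ℝ (Fin n))) (hΩ : IsOpen Ω)
    (f : EuclideanSpace ℝ (Fin n) → EuclideanSpace ℝ (Fin m) → EuclideanSpace ℝ (Fin n))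
    (hf : ContinuousOn (fun q : EuclideanSpace ℝ (Fin n) × EuclideanSpace ℝ (Fin m) =>
      f q.1 q.2) (Ω ×ˢ U))
    (T : ℝ≥0∞) (hT : 0 < T)
    (x : ℝ → EuclideanSpace ℝ (Fin n)) (u : ℝ → EuclideanSpace ℝ (Fin m))
    (hmem : ∀ t : ℝ, 0 ≤ t → ENNReal.ofReal t < T → x t ∈ Ω ∧ u t ∈ U)
    (humeas : Measurable u)
    (hub : ∀ a : ℝ, 0 ≤ a → ENNReal.ofReal a < T → ∃ M : ℝ, ∀ τ ∈ Set.Icc (0:ℝ) a, ‖u τ‖ ≤ M)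
    (hode : ∀ᵐ t ∂(volume : Measure ℝ), 0 ≤ t → ENNReal.ofReal t < T →
      HasDerivAt x (f (x t) (u t)) t)
    (s : ℝ → ℝ) (hs : ∀ t : ℝ, s t = ∫ τ in (0:ℝ)..t, (1 + ν ‖u τ‖))
    (tinv : ℝ → ℝ)
    (htinv : ∀ t : ℝ, 0 ≤ t → ENNReal.ofReal t < T → tinv (s t) = t) :
    ∀ᵐ σ ∂(volume : Measure ℝ), σ ∈ s '' {t : ℝ | 0 ≤ t ∧ ENNReal.ofReal t < T} →
      HasDerivAt (fun σ' => x (tinv σ'))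
        ((1 + ν ‖u (tinv σ)‖)⁻¹ • f (x (tinv σ)) (u (tinv σ))) σ := by
  classical
  -- basic facts about the integrand
  have hν0 : ∀ τ : ℝ, 0 ≤ ν ‖u τ‖ := fun τ => hνbij.mapsTo (mem_Ici.2 (norm_nonneg (u τ)))
  have hg1 : ∀ τ : ℝ, (1:ℝ) ≤ 1 + ν ‖u τ‖ := fun τ => by linarith [hν0 τ]
  have hg0 : ∀ τ : ℝ, (0:ℝ) ≤ 1 + ν ‖u τ‖ := fun τ => by linarith [hν0 τ]
  have hgm : Measurable (fun τ : ℝ => 1 + ν ‖u τ‖) := by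
    have hNmono : Monotone (fun r : ℝ => ν (max r 0)) := fun r r' h =>
      hνmono.monotoneOn (mem_Ici.2 (le_max_right r 0)) (mem_Ici.2 (le_max_right r' 0))
        (max_le_max h (le_refl 0))
    have heq : (fun τ : ℝ => 1 + ν ‖u τ‖) = fun τ => 1 + (fun r => ν (max r 0)) ‖u τ‖ := by
      funext τ; simp [max_eq_left (norm_nonneg (u τ))]
    rw [heq]
    exact measurable_const.add (hNmono.measurable.comp humeas.norm)
  -- uniform bounds on [0, b]
  have hCb : ∀ b : ℝ, 0 ≤ b → ENNReal.ofReal b < T →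
      ∃ C : ℝ, ∀ τ ∈ Icc (0:ℝ) b, 1 + ν ‖u τ‖ ≤ C := by
    intro b hb0 hbT
    obtain ⟨M, hM⟩ := hub b hb0 hbT
    refine ⟨1 + ν (max M 0), fun τ hτ => ?_⟩
    have h1 : ‖u τ‖ ≤ max M 0 := le_trans (hM τ hτ) (le_max_left M 0)
    have := hνmono.monotoneOn (mem_Ici.2 (norm_nonneg (u τ))) (mem_Ici.2 (le_max_right M 0)) h1
    linarith
  -- strict monotonicity on [0, b]
  have hsmono : ∀ b : ℝ, 0 ≤ b → ENNReal.ofReal b < T → StrictMonoOn s (Icc (0:ℝ) b) := by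
    intro b hb0 hbT t1 h1 t2 h2 h12
    obtain ⟨C, hC⟩ := hCb b hb0 hbT
    have hsub := subInt_aux hgm hg0 hC hs h1 h2
    have hone : (t2 - t1 : ℝ) ≤ ∫ τ in t1..t2, (1 + ν ‖u τ‖) := by
      have := intervalIntegral.integral_mono_on (f := fun _ : ℝ => (1:ℝ)) h12.le
        intervalIntegrable_const (intInt_aux hgm hg0 hC h1 h2) (fun τ _ => hg1 τ)
      simpa using this
    linarith
  -- Lipschitz bound on [0, b]
  have hlipb : ∀ b : ℝ, 0 ≤ b → ENNReal.ofReal b < T →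
      ∃ C : ℝ≥0, LipschitzOnWith C s (Icc (0:ℝ) b) := by
    intro b hb0 hbT
    obtain ⟨C, hC⟩ := hCb b hb0 hbT
    refine ⟨Real.toNNReal C, LipschitzOnWith.of_dist_le_mul fun t1 h1 t2 h2 => ?_⟩
    rw [Real.dist_eq, Real.dist_eq]
    have hsub := subInt_aux hgm hg0 hC hs h2 h1
    calc |s t1 - s t2| = ‖∫ τ in t2..t1, (1 + ν ‖u τ‖)‖ := by
          rw [hsub, Real.norm_eq_abs]
    _ ≤ max C 0 * |t1 - t2| := by
          refine intervalIntegral.norm_integral_le_of_norm_le_const fun τ hτ => ?_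
          have hτ' : τ ∈ Icc (0:ℝ) b :=
            ⟨(le_inf h2.1 h1.1).trans hτ.1.le, hτ.2.trans (sup_le h2.2 h1.2)⟩
          rw [Real.norm_eq_abs, abs_of_nonneg (hg0 τ)]
          exact (hC τ hτ').trans (le_max_left C 0)
    _ = (Real.toNNReal C : ℝ) * |t1 - t2| := by rw [Real.coe_toNNReal']
  -- rational cutoffs
  set qc : ℚ → ℝ := fun q => if 0 ≤ (q:ℝ) ∧ ENNReal.ofReal (q:ℝ) < T then (q:ℝ) else 0
    with hqc_def
  have hqc0 : ∀ q : ℚ, 0 ≤ qc q := by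
    intro q; rw [hqc_def]; dsimp only
    split
    · next h => exact h.1
    · exact le_refl 0
  have hqcT : ∀ q : ℚ, ENNReal.ofReal (qc q) < T := by
    intro q; rw [hqc_def]; dsimp only
    split
    · next h => exact h.2
    · simpa using hT
  have hrat : ∀ t : ℝ, 0 ≤ t → ENNReal.ofReal t < T → ∃ q : ℚ, t < (q:ℝ) ∧ qc q = (q:ℝ) := by
    intro t ht0 htT
    obtain ⟨q, hq0, hq1, hq2⟩ := ENNReal.lt_iff_exists_rat_btwn.1 htT
    have e : (Real.toNNReal (q:ℝ) : ℝ≥0∞) = ENNReal.ofReal (q:ℝ) := rfl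
    rw [e] at hq1 hq2
    have ht' : t < (q:ℝ) := (ENNReal.ofReal_lt_ofReal_iff_of_nonneg ht0).1 hq1
    exact ⟨q, ht', if_pos ⟨Rat.cast_nonneg.2 hq0, hq2⟩⟩
  -- a.e. differentiability of s
  have hsder : ∀ᵐ t ∂(volume : Measure ℝ), (0 < t ∧ ENNReal.ofReal t < T) →
      HasDerivAt s (1 + ν ‖u t‖) t := by
    have h1 : ∀ q : ℚ, ∀ᵐ t ∂(volume : Measure ℝ), t ∈ Ioo (0:ℝ) (qc q) →
        HasDerivAt s (1 + ν ‖u t‖) t := by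
      intro q
      obtain ⟨C, hC⟩ := hCb (qc q) (hqc0 q) (hqcT q)
      exact ae_hasDeriv_integral_aux hgm hg1 hs hC
    filter_upwards [ae_all_iff.2 h1] with t ht h
    obtain ⟨ht0, htT⟩ := h
    obtain ⟨q, hq1, hq2⟩ := hrat t ht0.le htT
    exact ht q (by rw [hq2]; exact ⟨ht0, hq1⟩)
  -- images of null sets in [0, T) under s are null
  have himg_null : ∀ N : Set ℝ, volume N = 0 →
      (∀ t ∈ N, 0 ≤ t ∧ ENNReal.ofReal t < T) → volume (s '' N) = 0 := by
    intro N hN hNT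
    have hcover : s '' N ⊆ ⋃ q : ℚ, s '' (N ∩ Icc (0:ℝ) (qc q)) := by
      rintro _ ⟨t, htN, rfl⟩
      obtain ⟨ht0, htT⟩ := hNT t htN
      obtain ⟨q, hq1, hq2⟩ := hrat t ht0 htT
      exact mem_iUnion.2 ⟨q, mem_image_of_mem _ ⟨htN, ⟨ht0, by rw [hq2]; exact hq1.le⟩⟩⟩
    refine measure_mono_null hcover (measure_iUnion_null fun q => ?_)
    obtain ⟨C, hlip⟩ := hlipb (qc q) (hqc0 q) (hqcT q)
    exact lipOn_image_null hlip inter_subset_right (measure_mono_null inter_subset_left hN)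
  -- the key pointwise statement at good points
  have key : ∀ t : ℝ, 0 < t → ENNReal.ofReal t < T →
      HasDerivAt x (f (x t) (u t)) t → HasDerivAt s (1 + ν ‖u t‖) t →
      HasDerivAt (fun σ' => x (tinv σ'))
        ((1 + ν ‖u (tinv (s t))‖)⁻¹ • f (x (tinv (s t))) (u (tinv (s t)))) (s t) := by
    intro t ht0 htT hxd hsd
    obtain ⟨b, hb0, htb, hbT⟩ : ∃ b : ℝ, 0 ≤ b ∧ t < b ∧ ENNReal.ofReal b < T := by
      obtain ⟨r, hr0, h1, h2⟩ := ENNReal.lt_iff_exists_real_btwn.1 htT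
      exact ⟨r, hr0, (ENNReal.ofReal_lt_ofReal_iff_of_nonneg ht0.le).1 h1, h2⟩
    set α : ℝ := t / 2 with hα_def
    set β : ℝ := (t + b) / 2 with hβ_def
    have hα0 : 0 < α := half_pos ht0
    have hαt : α < t := half_lt_self ht0
    have htβ : t < β := by rw [hβ_def]; linarith
    have hβb : β < b := by rw [hβ_def]; linarith
    have hmemα : α ∈ Icc (0:ℝ) b := ⟨hα0.le, by linarith⟩
    have hmemt : t ∈ Icc (0:ℝ) b := ⟨ht0.le, htb.le⟩
    have hmemβ : β ∈ Icc (0:ℝ) b := ⟨by linarith, hβb.le⟩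
    have hmono := hsmono b hb0 hbT
    obtain ⟨C, hlip⟩ := hlipb b hb0 hbT
    have hcontS : ContinuousOn s (Icc (0:ℝ) b) := hlip.continuousOn
    have hIccsub : Icc α β ⊆ Icc (0:ℝ) b := Icc_subset_Icc hα0.le hβb.le
    have hTle : ∀ t' ∈ Icc α β, 0 ≤ t' ∧ ENNReal.ofReal t' < T := fun t' ht' =>
      ⟨hα0.le.trans ht'.1,
        lt_of_le_of_lt (ENNReal.ofReal_le_ofReal (ht'.2.trans hβb.le)) hbT⟩
    have hfar : ∀ y ∈ Ioo (s α) (s β), tinv y ∈ Ioo α β ∧ s (tinv y) = y := by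
      intro y hy
      obtain ⟨t', ht'mem, hst'⟩ := intermediate_value_Icc (by linarith : α ≤ β)
        (hcontS.mono hIccsub) (⟨hy.1.le, hy.2.le⟩ : y ∈ Icc (s α) (s β))
      obtain ⟨h0t', hTt'⟩ := hTle t' ht'mem
      have htinv' : tinv y = t' := by rw [← hst']; exact htinv t' h0t' hTt'
      have hne1 : t' ≠ α := fun h => hy.1.ne' (by rw [← hst', h])
      have hne2 : t' ≠ β := fun h => hy.2.ne (by rw [← hst', h])
      refine ⟨?_, by rw [htinv', hst']⟩
      rw [htinv']
      exact ⟨lt_of_le_of_ne ht'mem.1 (Ne.symm hne1), lt_of_le_of_ne ht'mem.2 hne2⟩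
    have hsαt : s α < s t := hmono hmemα hmemt hαt
    have hstβ : s t < s β := hmono hmemt hmemβ htβ
    have hI : Ioo (s α) (s β) ∈ 𝓝 (s t) := isOpen_Ioo.mem_nhds ⟨hsαt, hstβ⟩
    have hfg : ∀ᶠ y in 𝓝 (s t), s (tinv y) = y :=
      eventually_of_mem hI fun y hy => (hfar y hy).2
    have htinvst : tinv (s t) = t := htinv t ht0.le htT
    have hmonoInv : MonotoneOn tinv (Ioo (s α) (s β)) := by
      intro y1 h1 y2 h2 h12
      by_contra hlt
      push_neg at hlt
      have e1 := hfar y1 h1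
      have e2 := hfar y2 h2
      have hcmp := hmono (hIccsub (Ioo_subset_Icc_self e2.1))
        (hIccsub (Ioo_subset_Icc_self e1.1)) hlt
      rw [e1.2, e2.2] at hcmp
      exact absurd h12 (not_le.2 hcmp)
    have himg : tinv '' Ioo (s α) (s β) ∈ 𝓝 (tinv (s t)) := by
      rw [htinvst]
      refine mem_of_superset (isOpen_Ioo.mem_nhds ⟨hαt, htβ⟩) fun t' ht' => ?_
      have h1 : s t' ∈ Ioo (s α) (s β) :=
        ⟨hmono hmemα (hIccsub (Ioo_subset_Icc_self ht')) ht'.1,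
          hmono (hIccsub (Ioo_subset_Icc_self ht')) hmemβ ht'.2⟩
      obtain ⟨h0, hT'⟩ := hTle t' (Ioo_subset_Icc_self ht')
      exact ⟨s t', h1, htinv t' h0 hT'⟩
    have hcontInv : ContinuousAt tinv (s t) :=
      continuousAt_of_monotoneOn_of_image_mem_nhds hmonoInv hI himg
    have hνpos : 0 < 1 + ν ‖u t‖ := by linarith [hν0 t]
    have hsd' : HasDerivAt s (1 + ν ‖u t‖) (tinv (s t)) := by rw [htinvst]; exact hsd
    have htder : HasDerivAt tinv (1 + ν ‖u t‖)⁻¹ (s t) :=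
      HasDerivAt.of_local_left_inverse hcontInv hsd' hνpos.ne' hfg
    have hxd' : HasDerivAt x (f (x t) (u t)) (tinv (s t)) := by rw [htinvst]; exact hxd
    have hcomp := HasDerivAt.scomp (𝕜 := ℝ) (𝕜' := ℝ) (s t) hxd' htder
    rw [htinvst]
    exact hcomp
  -- assemble
  rw [MeasureTheory.ae_iff]
  set B : Set ℝ := {t : ℝ | (0 < t ∧ ENNReal.ofReal t < T) ∧
    ¬(HasDerivAt x (f (x t) (u t)) t ∧ HasDerivAt s (1 + ν ‖u t‖) t)} with hB_def
  have hBnull : volume B = 0 := by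
    have hae := hode.and hsder
    rw [ae_iff] at hae
    refine measure_mono_null ?_ hae
    intro t ht
    obtain ⟨⟨ht0, htT⟩, hnot⟩ := ht
    intro hcon
    exact hnot ⟨hcon.1 ht0.le htT, hcon.2 ⟨ht0, htT⟩⟩
  have hsB : volume (s '' B) = 0 := himg_null B hBnull (fun t ht => ⟨ht.1.1.le, ht.1.2⟩)
  refine measure_mono_null ?_ (measure_union_null (measure_singleton (s 0)) hsB)
  intro σ hσ
  rw [mem_setOf_eq, Classical.not_imp] at hσ
  obtain ⟨⟨t, ⟨ht0, htT⟩, rfl⟩, hnP⟩ := hσ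
  rcases eq_or_lt_of_le ht0 with h | h
  · exact Or.inl (mem_singleton_iff.2 (by rw [← h]))
  · refine Or.inr (mem_image_of_mem _ ?_)
    exact ⟨⟨h, htT⟩, fun hcon => hnP (key t h htT hcon.1 hcon.2)⟩
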